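/- arXiv:2009.06839 — 2 statements merged into one kernel-verified Lean document; each statement's English description precedes it below -/
import Mathlib

section
/- Let N ≥ 1, k ≥ 1, λ ∈ ℤ^N with λ₁ ≥ λ₂ ≥ ⋯ ≥ λ_N, and p ∈ ℂ. Let u₂, …, u_{N+k} ∈ ℂ with e^{u₂}, …, e^{u_{N+k}} pairwise distinct, and v₁, …, v_k ∈ ℂ with e^{v₁}, …, e^{v_k} pairwise distinct, such that u_i ≠ v_j for all 2 ≤ i ≤ N+k and 1 ≤ j ≤ k, and e^{v₁} ∉ {e^{u₂}, …, e^{u_{N+k}}}. Then, in the punctured limit u₁ → v₁ (u₁ ≠ v₁), the supersymmetric Schur lift s_{λ,p}(e^{u₁}, e^{u₂}, …, e^{u_{N+k}} / e^{v₁}, …, e^{v_k}) converges to s_{λ,p}(e^{u₂}, …, e^{u_{N+k}} / e^{v₂}, …, e^{v_k}), where for k = 1 the limit is interpreted as the rational Schur function s_λ(e^{u₂}, …, e^{u_{N+1}}). -/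
open Complex Finset Filter Topology

noncomputable section

/-- Vandermonde product `Δ(w) = ∏_{i<j} (w i - w j)`. -/
def vprod {m : ℕ} (w : Fin m → ℂ) : ℂ :=
  ∏ i : Fin m, ∏ j : Fin m, if i < j then w i - w j else 1

/-- `D(x;y) = ∏_{i,j} (x i + y j)`. -/
def dprod {m n : ℕ} (x : Fin m → ℂ) (y : Fin n → ℂ) : ℂ :=
  ∏ i : Fin m, ∏ j : Fin n, (x i + y j)

/-- The `(N+k) × (N+k)` matrix `(E_p(u;v) | A_{λ+δ_N}(u))`: the first `k` columns have
entries `e^{p (u_i - v_j)}/(u_i - v_j)` and the last `N` columns have entries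
`e^{u_i (λ_j + N - j)}` (0-indexed: `λ_j + (N - 1 - j)`). -/
def schurLiftMatrix (N k : ℕ) (lam : Fin N → ℤ) (p : ℂ)
    (u : Fin (N + k) → ℂ) (v : Fin k → ℂ) :
    Matrix (Fin (N + k)) (Fin (N + k)) ℂ :=
  Matrix.of fun i j =>
    if h : (j : ℕ) < k then Complex.exp (p * (u i - v ⟨j, h⟩)) / (u i - v ⟨j, h⟩)
    else Complex.exp (u i *
      (((lam ⟨(j : ℕ) - k, by have := j.isLt; omega⟩ : ℤ) : ℂ) +
        (N : ℂ) - 1 - (((j : ℕ) - k : ℕ) : ℂ)))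

/-- The supersymmetric lift `s_{λ,p}(e^u / e^v)` of the rational Schur function:
`(-1)^{Nk} · ∏ e^{-v_i} · D(e^u;-e^v)/(Δ(e^u)Δ(-e^v)) · det(E_p(u;v) | A_{λ+δ_N}(u))`.
For `k = 0` this equals the rational Schur function `s_λ(e^{u_1}, …, e^{u_N})`. -/
def schurLift (N k : ℕ) (lam : Fin N → ℤ) (p : ℂ)
    (u : Fin (N + k) → ℂ) (v : Fin k → ℂ) : ℂ :=
  (-1 : ℂ) ^ (N * k) * (∏ i : Fin k, Complex.exp (-v i)) *
    (dprod (fun i => Complex.exp (u i)) (fun j => -Complex.exp (v j)) /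
      (vprod (fun i => Complex.exp (u i)) * vprod fun j => -Complex.exp (v j))) *
    (schurLiftMatrix N k lam p u v).det

lemma prod_neg_fin {m : ℕ} (f : Fin m → ℂ) : (∏ i, -f i) = (-1)^m * ∏ i, f i := by
  rw [show ((-1:ℂ)^m) = ∏ _i : Fin m, (-1:ℂ) by simp, ← Finset.prod_mul_distrib]
  simp

lemma prod_sub_swap {m : ℕ} (f g : Fin m → ℂ) :
    (∏ i, (f i - g i)) = (-1)^m * ∏ i, (g i - f i) := by
  rw [← prod_neg_fin]
  simp [neg_sub]

lemma vprod_cons {m : ℕ} (a : ℂ) (w : Fin m → ℂ) :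
    vprod (Fin.cons a w) = (∏ i, (a - w i)) * vprod w := by
  unfold vprod
  rw [Fin.prod_univ_succ]
  congr 1
  · rw [Fin.prod_univ_succ]
    simp
  · apply Finset.prod_congr rfl
    intro i _
    rw [Fin.prod_univ_succ]
    simp [Fin.succ_lt_succ_iff]

lemma dprod_cons_left {m n : ℕ} (a : ℂ) (x : Fin m → ℂ) (y : Fin n → ℂ) :
    dprod (Fin.cons a x) y = (∏ j, (a + y j)) * dprod x y := by
  unfold dprod
  rw [Fin.prod_univ_succ]
  simp

lemma dprod_cons_right {m n : ℕ} (x : Fin m → ℂ) (b : ℂ) (y : Fin n → ℂ) :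
    dprod x (Fin.cons b y) = (∏ i, (x i + b)) * dprod x y := by
  unfold dprod
  rw [← Finset.prod_mul_distrib]
  apply Finset.prod_congr rfl
  intro i _
  rw [Fin.prod_univ_succ]
  simp

lemma vprod_ne_zero {m : ℕ} {w : Fin m → ℂ} (hw : Function.Injective w) : vprod w ≠ 0 := by
  unfold vprod
  rw [Finset.prod_ne_zero_iff]
  intro i _
  rw [Finset.prod_ne_zero_iff]
  intro j _
  split_ifs with h
  · exact sub_ne_zero.2 fun he => absurd (hw he) (ne_of_lt h)
  · exact one_ne_zero

lemma exp_comp_cons {m : ℕ} (z : ℂ) (u : Fin m → ℂ) :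
    (fun i : Fin (m+1) => Complex.exp ((Fin.cons z u : Fin (m+1) → ℂ) i)) =
      Fin.cons (Complex.exp z) (fun i => Complex.exp (u i)) := by
  funext i
  refine Fin.cases ?_ ?_ i <;> simp

lemma exp_cons_apply {m : ℕ} (z : ℂ) (u : Fin m → ℂ) (i : Fin (m+1)) :
    Complex.exp ((Fin.cons z u : Fin (m+1) → ℂ) i) =
      (Fin.cons (Complex.exp z) (fun i => Complex.exp (u i)) : Fin (m+1) → ℂ) i := by
  refine Fin.cases ?_ ?_ i <;> simp


set_option maxHeartbeats 1000000 in
/-- In the punctured limit `u₁ → v₁`, the supersymmetric Schur lift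
`s_{λ,p}(e^{u₁}, e^{u₂}, …, e^{u_{N+k}} / e^{v₁}, …, e^{v_k})` converges to
`s_{λ,p}(e^{u₂}, …, e^{u_{N+k}} / e^{v₂}, …, e^{v_k})` (which, for `k = 1`, is the
rational Schur function `s_λ(e^{u₂}, …, e^{u_{N+1}})`).  Here the number of dual
variables is `k + 1 ≥ 1`. -/
theorem statement1 (N k : ℕ) (hN : 1 ≤ N) (lam : Fin N → ℤ) (hlam : Antitone lam) (p : ℂ)
    (u : Fin (N + k) → ℂ) (v : Fin (k + 1) → ℂ)
    (hu : Function.Injective fun i => Complex.exp (u i))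
    (hv : Function.Injective fun j => Complex.exp (v j))
    (huv : ∀ (i : Fin (N + k)) (j : Fin (k + 1)), u i ≠ v j)
    (hev : ∀ i : Fin (N + k), Complex.exp (v 0) ≠ Complex.exp (u i)) :
    Tendsto (fun z : ℂ => schurLift N (k + 1) lam p (Fin.cons z u) v)
      (𝓝[≠] (v 0)) (𝓝 (schurLift N k lam p u (Fin.tail v))) := by
  classical
  set w0 : ℂ := v 0 with hw0
  set M : ℂ → Matrix (Fin (N+k+1)) (Fin (N+k+1)) ℂ :=
    fun z => schurLiftMatrix N (k+1) lam p (Fin.cons z u) v with hM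
  set r : ℂ → Fin (N+k+1) → ℂ := fun z j =>
    if j = 0 then Complex.exp (p * (z - w0)) else (z - w0) * (M z 0 j) with hr
  set Mhat : ℂ → Matrix (Fin (N+k+1)) (Fin (N+k+1)) ℂ :=
    fun z => (M z).updateRow 0 (r z) with hMhat
  -- basic nonvanishing facts
  have hA : (∏ i, (Complex.exp w0 - Complex.exp (u i))) ≠ 0 :=
    Finset.prod_ne_zero_iff.2 fun i _ => sub_ne_zero.2 (hev i)
  have hB : (∏ j : Fin k, (Complex.exp (v j.succ) - Complex.exp w0)) ≠ 0 :=
    Finset.prod_ne_zero_iff.2 fun j _ => sub_ne_zero.2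
      (fun h => Fin.succ_ne_zero j (hv h))
  have hDu : vprod (fun i => Complex.exp (u i)) ≠ 0 := vprod_ne_zero hu
  have hDvt : vprod (fun j : Fin k => -Complex.exp (v j.succ)) ≠ 0 := by
    apply vprod_ne_zero
    intro a b h
    simp only [neg_inj] at h
    exact Fin.succ_injective _ (hv h)
  have hDv : vprod (fun j : Fin (k+1) => -Complex.exp (v j)) ≠ 0 := by
    apply vprod_ne_zero
    intro a b h
    simp only [neg_inj] at h
    exact hv h
  -- det identity off the singularity
  have hdet_eq : ∀ z : ℂ, z ≠ w0 → (Mhat z).det = (z - w0) * (M z).det := by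
    intro z hz
    have hzne : z - w0 ≠ 0 := sub_ne_zero.2 hz
    have hre : r z = (z - w0) • (M z 0) := by
      funext j
      by_cases hj : j = 0
      · subst hj
        have h0 : M z 0 0 = Complex.exp (p * (z - w0)) / (z - w0) := by
          simp [hM, schurLiftMatrix, hw0]
        simp only [hr, if_pos rfl, Pi.smul_apply, smul_eq_mul, h0]
        rw [mul_div_cancel₀ _ hzne]
      · simp [hr, hj]
    rw [hMhat]
    simp only [hre]
    rw [Matrix.det_updateRow_smul, Matrix.updateRow_eq_self]
  -- continuity of z ↦ Mhat z at w0
  have hMcont : ContinuousAt Mhat w0 := by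
    apply continuousAt_pi.2
    intro i
    apply continuousAt_pi.2
    intro j
    obtain rfl | ⟨t, rfl⟩ := Fin.eq_zero_or_eq_succ i
    · -- row 0
      have hrw : (fun z => Mhat z 0 j) = fun z => r z j := by
        funext z; simp [hMhat]
      rw [hrw]
      by_cases hj : j = 0
      · subst hj
        simp only [hr, if_pos rfl]
        exact (Complex.continuous_exp.comp (continuous_const.mul
          (continuous_id.sub continuous_const))).continuousAt
      · simp only [hr, if_neg hj]
        by_cases hjk : (j : ℕ) < k + 1
        · have hform : (fun z => (z - w0) * M z 0 j) =
              fun z => (z - w0) * (Complex.exp (p * (z - v ⟨j, hjk⟩)) / (z - v ⟨j, hjk⟩)) := by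
            funext z
            simp [hM, schurLiftMatrix, hjk, show (j : ℕ) ≤ k by omega]
          rw [hform]
          have hvj : w0 - v ⟨j, hjk⟩ ≠ 0 := by
            intro h
            have h' : v 0 = v ⟨j, hjk⟩ := by
              have := sub_eq_zero.mp h
              rw [hw0] at this
              exact this
            have h2 : (0 : Fin (k+1)) = ⟨j, hjk⟩ :=
              hv (show Complex.exp (v 0) = Complex.exp (v ⟨j, hjk⟩) from by rw [h'])
            apply hj
            have hval0 : (j : ℕ) = 0 := by simpa using (congrArg Fin.val h2).symm
            exact Fin.ext (by simp [hval0])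
          apply ContinuousAt.mul
          · exact (continuous_id.sub continuous_const).continuousAt
          · apply ContinuousAt.div
            · exact (Complex.continuous_exp.comp (continuous_const.mul
                (continuous_id.sub continuous_const))).continuousAt
            · exact (continuous_id.sub continuous_const).continuousAt
            · exact hvj
        · have hform : (fun z => (z - w0) * M z 0 j) =
              fun z => (z - w0) * Complex.exp (z *
                (((lam ⟨(j : ℕ) - (k+1), by have := j.isLt; omega⟩ : ℤ) : ℂ) +
                  (N : ℂ) - 1 - (((j : ℕ) - (k+1) : ℕ) : ℂ))) := by
            funext z
            simp [hM, schurLiftMatrix, hjk, show ¬ (j : ℕ) ≤ k by omega]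
          rw [hform]
          apply ContinuousAt.mul
          · exact (continuous_id.sub continuous_const).continuousAt
          · exact (Complex.continuous_exp.comp
              (continuous_id.mul continuous_const)).continuousAt
    · -- rows ≥ 1 : constant in z
      have hconst : (fun z => Mhat z t.succ j) = fun _ =>
          schurLiftMatrix N (k+1) lam p (Fin.cons 0 u) v t.succ j := by
        funext z
        simp [hMhat, Matrix.updateRow_ne (Fin.succ_ne_zero t), hM, schurLiftMatrix]
      rw [hconst]
      exact continuousAt_const
  have hdcont : ContinuousAt (fun z => (Mhat z).det) w0 :=
    (Continuous.matrix_det (continuous_id)).continuousAt.comp hMcont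
  -- value at w0
  have hrow : ∀ j, Mhat w0 0 j = if j = 0 then 1 else 0 := by
    intro j
    by_cases hj : j = 0 <;>
      simp [hMhat, hr, hj, Matrix.updateRow_self]
  have hMinor : (Mhat w0).submatrix Fin.succ Fin.succ =
      schurLiftMatrix N k lam p u (Fin.tail v) := by
    ext t s
    simp only [Matrix.submatrix_apply, hMhat, Matrix.updateRow_ne (Fin.succ_ne_zero t),
      hM, schurLiftMatrix, Matrix.of_apply, Fin.cons_succ]
    by_cases hs : (s : ℕ) < k
    · rw [dif_pos (show ((s.succ : Fin (N+k+1)) : ℕ) < k + 1 by simp [Fin.val_succ]; omega),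
        dif_pos hs]
      simp [Fin.tail, Fin.succ]
    · rw [dif_neg (show ¬ ((s.succ : Fin (N+k+1)) : ℕ) < k + 1 by simp [Fin.val_succ]; omega),
        dif_neg hs]
      simp only [Fin.val_succ, Nat.succ_sub_succ]
  have hMhatw0 : (Mhat w0).det = (schurLiftMatrix N k lam p u (Fin.tail v)).det := by
    rw [Matrix.det_succ_row_zero]
    rw [Fintype.sum_eq_single 0]
    · rw [hrow 0, if_pos rfl]
      simp [Fin.succAbove_zero, hMinor]
    · intro j hj
      rw [hrow j, if_neg hj]
      ring
  -- slope limit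
  have hslope : Tendsto (fun z => (Complex.exp z - Complex.exp w0) / (z - w0))
      (𝓝[≠] w0) (𝓝 (Complex.exp w0)) := by
    have h := hasDerivAt_iff_tendsto_slope.1 (Complex.hasDerivAt_exp w0)
    refine h.congr fun z => ?_
    rw [slope_def_field]
  -- determinant limit
  have hdetT : Tendsto (fun z => (z - w0) * (M z).det) (𝓝[≠] w0)
      (𝓝 ((schurLiftMatrix N k lam p u (Fin.tail v)).det)) := by
    have h1 : Tendsto (fun z => (Mhat z).det) (𝓝[≠] w0) (𝓝 ((Mhat w0).det)) :=
      hdcont.tendsto.mono_left nhdsWithin_le_nhds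
    rw [hMhatw0] at h1
    refine h1.congr' ?_
    filter_upwards [self_mem_nhdsWithin] with z hz
    exact hdet_eq z hz
  -- the regular prefactor
  set C : ℂ := (-1 : ℂ) ^ (N * (k+1)) * (∏ j : Fin (k+1), Complex.exp (-v j)) with hC
  set Q : ℂ := dprod (fun i => Complex.exp (u i)) (fun j : Fin (k+1) => -Complex.exp (v j))
    with hQ
  set Dv : ℂ := vprod (fun j : Fin (k+1) => -Complex.exp (v j)) with hDvdef
  set G : ℂ → ℂ := fun z => C *
    ((∏ j : Fin k, (Complex.exp z - Complex.exp (v j.succ))) * Q /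
      ((∏ i, (Complex.exp z - Complex.exp (u i))) * vprod (fun i => Complex.exp (u i)) * Dv))
    with hG
  have hGcont : ContinuousAt G w0 := by
    apply ContinuousAt.mul continuousAt_const
    apply ContinuousAt.div
    · apply ContinuousAt.mul _ continuousAt_const
      exact (continuous_finset_prod _ fun j _ =>
        Complex.continuous_exp.sub continuous_const).continuousAt
    · apply ContinuousAt.mul (ContinuousAt.mul _ continuousAt_const) continuousAt_const
      exact (continuous_finset_prod _ fun i _ =>
        Complex.continuous_exp.sub continuous_const).continuousAt
    · exact mul_ne_zero (mul_ne_zero hA hDu) hDv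
  -- eventual equality of the full function with the factored form
  have hFeq : ∀ z : ℂ, z ≠ w0 →
      G z * ((Complex.exp z - Complex.exp w0) / (z - w0)) * ((z - w0) * (M z).det) =
        schurLift N (k+1) lam p (Fin.cons z u) v := by
    intro z hz
    have hzne : z - w0 ≠ 0 := sub_ne_zero.2 hz
    have helper : ∀ c q d e det : ℂ,
        c * (q / d) * (e / (z - w0)) * ((z - w0) * det) = c * (e * q / d) * det := by
      intro c q d e det
      have h : e / (z - w0) * ((z - w0) * det) = e * det := by
        rw [← mul_assoc, div_mul_cancel₀ _ hzne]
      calc c * (q / d) * (e / (z - w0)) * ((z - w0) * det)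
          = c * (q / d) * (e / (z - w0) * ((z - w0) * det)) := by ring
        _ = c * (q / d) * (e * det) := by rw [h]
        _ = c * (e * q / d) * det := by ring
    simp only [hG]
    rw [helper]
    unfold schurLift
    simp only [exp_cons_apply]
    have h1 : dprod (m := N + (k+1)) (n := k+1)
        (fun i => (Fin.cons (Complex.exp z) (fun i => Complex.exp (u i)) : Fin (Nat.add N k + 1) → ℂ) i)
        (fun j => -Complex.exp (v j)) =
        (∏ j : Fin (k+1), (Complex.exp z + -Complex.exp (v j))) *
          dprod (fun i => Complex.exp (u i)) (fun j : Fin (k+1) => -Complex.exp (v j)) :=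
      dprod_cons_left _ _ _
    have h2 : vprod (m := N + (k+1))
        (fun i => (Fin.cons (Complex.exp z) (fun i => Complex.exp (u i)) : Fin (Nat.add N k + 1) → ℂ) i) =
        (∏ i : Fin (N+k), (Complex.exp z - Complex.exp (u i))) *
          vprod (fun i => Complex.exp (u i)) :=
      vprod_cons _ _
    rw [h1, h2]
    rw [Fin.prod_univ_succ (f := fun j : Fin (k+1) => Complex.exp z + -Complex.exp (v j))]
    simp only [hM, hQ, hDvdef, hC, hw0]
    simp only [← sub_eq_add_neg]
    ring_nf
  -- final limit value identity
  have hval : G w0 * Complex.exp w0 * (schurLiftMatrix N k lam p u (Fin.tail v)).det =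
      schurLift N k lam p u (Fin.tail v) := by
    have htail : ∀ j : Fin k, Fin.tail v j = v j.succ := fun j => rfl
    have hconsv : (fun j : Fin (k+1) => -Complex.exp (v j)) =
        Fin.cons (-Complex.exp (v 0)) (fun j : Fin k => -Complex.exp (v j.succ)) := by
      funext j
      refine Fin.cases ?_ ?_ j <;> simp
    have hQsplit : Q = (∏ i, (Complex.exp (u i) - Complex.exp (v 0))) *
        dprod (fun i => Complex.exp (u i)) (fun j : Fin k => -Complex.exp (v j.succ)) := by
      rw [hQ, hconsv, dprod_cons_right]
      simp [sub_eq_add_neg]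
    have hDvsplit : Dv = (∏ j : Fin k, (Complex.exp (v j.succ) - Complex.exp (v 0))) *
        vprod (fun j : Fin k => -Complex.exp (v j.succ)) := by
      rw [hDvdef, hconsv, vprod_cons]
      congr 1
      apply Finset.prod_congr rfl
      intro j _
      ring
    have hP0 : (∏ j : Fin k, (Complex.exp (v 0) - Complex.exp (v j.succ))) =
        (-1 : ℂ)^k * ∏ j : Fin k, (Complex.exp (v j.succ) - Complex.exp (v 0)) :=
      prod_sub_swap _ _
    have hA' : (∏ i, (Complex.exp (u i) - Complex.exp (v 0))) =
        (-1 : ℂ)^(N+k) * ∏ i, (Complex.exp (v 0) - Complex.exp (u i)) :=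
      prod_sub_swap _ _
    have hsgn : (-1 : ℂ) ^ (N * (k+1)) * ((-1:ℂ)^k * (-1:ℂ)^(N+k)) = (-1:ℂ) ^ (N * k) := by
      rw [← pow_add, ← pow_add,
        show N * (k+1) + (k + (N+k)) = N * k + 2 * (N + k) by ring,
        pow_add, pow_mul]
      norm_num
    unfold schurLift
    simp only [htail]
    simp only [hG, hQsplit, hDvsplit, hC, hw0, hP0, hA',
      Fin.prod_univ_succ (f := fun j : Fin (k+1) => Complex.exp (-v j))]
    rw [hw0] at hA hB
    have hAB : (∏ i, (Complex.exp (v 0) - Complex.exp (u i))) *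
        (∏ j : Fin k, (Complex.exp (v j.succ) - Complex.exp (v 0))) ≠ 0 := mul_ne_zero hA hB
    have hfrac : ((-1:ℂ)^k * ∏ j : Fin k, (Complex.exp (v j.succ) - Complex.exp (v 0))) *
          (((-1:ℂ)^(N+k) * ∏ i, (Complex.exp (v 0) - Complex.exp (u i))) *
            dprod (fun i => Complex.exp (u i)) (fun j : Fin k => -Complex.exp (v j.succ))) /
          (((∏ i, (Complex.exp (v 0) - Complex.exp (u i))) * vprod (fun i => Complex.exp (u i))) *
            ((∏ j : Fin k, (Complex.exp (v j.succ) - Complex.exp (v 0))) *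
              vprod (fun j : Fin k => -Complex.exp (v j.succ)))) =
        ((-1:ℂ)^k * (-1:ℂ)^(N+k)) *
          (dprod (fun i => Complex.exp (u i)) (fun j : Fin k => -Complex.exp (v j.succ)) /
            (vprod (fun i => Complex.exp (u i)) * vprod (fun j : Fin k => -Complex.exp (v j.succ)))) := by
      rw [show ((-1:ℂ)^k * ∏ j : Fin k, (Complex.exp (v j.succ) - Complex.exp (v 0))) *
          (((-1:ℂ)^(N+k) * ∏ i, (Complex.exp (v 0) - Complex.exp (u i))) *
            dprod (fun i => Complex.exp (u i)) (fun j : Fin k => -Complex.exp (v j.succ))) =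
          ((∏ i, (Complex.exp (v 0) - Complex.exp (u i))) *
            (∏ j : Fin k, (Complex.exp (v j.succ) - Complex.exp (v 0)))) *
          (((-1:ℂ)^k * (-1:ℂ)^(N+k)) *
            dprod (fun i => Complex.exp (u i)) (fun j : Fin k => -Complex.exp (v j.succ))) from by ring,
        show (((∏ i, (Complex.exp (v 0) - Complex.exp (u i))) * vprod (fun i => Complex.exp (u i))) *
            ((∏ j : Fin k, (Complex.exp (v j.succ) - Complex.exp (v 0))) *
              vprod (fun j : Fin k => -Complex.exp (v j.succ)))) =
          ((∏ i, (Complex.exp (v 0) - Complex.exp (u i))) *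
            (∏ j : Fin k, (Complex.exp (v j.succ) - Complex.exp (v 0)))) *
          (vprod (fun i => Complex.exp (u i)) * vprod (fun j : Fin k => -Complex.exp (v j.succ))) from by ring,
        mul_div_mul_left _ _ hAB, mul_div_assoc]
    rw [hfrac]
    have hexp : Complex.exp (-v 0) * Complex.exp (v 0) = 1 := by
      rw [← Complex.exp_add]
      simp
    linear_combination ((-1:ℂ)^(N*(k+1)) * ((-1:ℂ)^k * (-1:ℂ)^(N+k)) *
        (∏ i : Fin k, Complex.exp (-v i.succ)) *
        (dprod (fun i => Complex.exp (u i)) (fun j : Fin k => -Complex.exp (v j.succ)) /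
          (vprod (fun i => Complex.exp (u i)) * vprod (fun j : Fin k => -Complex.exp (v j.succ)))) *
        (schurLiftMatrix N k lam p u (Fin.tail v)).det) * hexp +
      ((∏ i : Fin k, Complex.exp (-v i.succ)) *
        (dprod (fun i => Complex.exp (u i)) (fun j : Fin k => -Complex.exp (v j.succ)) /
          (vprod (fun i => Complex.exp (u i)) * vprod (fun j : Fin k => -Complex.exp (v j.succ)))) *
        (schurLiftMatrix N k lam p u (Fin.tail v)).det) * hsgn
  -- assemble
  have final := ((hGcont.tendsto.mono_left nhdsWithin_le_nhds).mul hslope).mul hdetT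
  rw [hval] at final
  refine final.congr' ?_
  filter_upwards [self_mem_nhdsWithin] with z hz
  exact hFeq z hz
end
end

section
/- Let N ≥ 1, let λ ∈ ℤ^N with λ₁ ≥ λ₂ ≥ ⋯ ≥ λ_N, let x₁, …, x_N ∈ ℂ ∖ {0} be pairwise distinct, and let q ∈ ℂ ∖ {0} be such that q·x_i ≠ x_j for all i ≠ j. Then ∑_{i=1}^N ∏_{j ≠ i} ((q x_i − x_j)/(x_i − x_j)) · s_λ(x₁, …, x_{i−1}, q x_i, x_{i+1}, …, x_N) = ( ∑_{j=1}^N q^{λ_j + N − j} ) · s_λ(x₁, …, x_N). -/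
open Complex Finset Filter Topology

noncomputable section

/-- The rational Schur function `s_λ(w) = det(w_i^{λ_j + N - j}) / Δ(w)`
(0-indexed exponent `λ_j + N - 1 - j`, integer powers). -/
def schurFun (N : ℕ) (lam : Fin N → ℤ) (w : Fin N → ℂ) : ℂ :=
  (Matrix.of fun i j : Fin N =>
    w i ^ (lam j + (N : ℤ) - 1 - ((j : ℕ) : ℤ))).det / vprod w

section Aux

open Matrix

lemma det_updateRow_mulRow {N : ℕ} (A : Matrix (Fin N) (Fin N) ℂ) (d : Fin N → ℂ) (i : Fin N) :
    (A.updateRow i (fun j => d j * A i j)).det = ∑ k, (d k * A i k) * A.adjugate k i := by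
  have hv : (fun j => d j * A i j)
      = ∑ k : Fin N, (d k * A i k) • (Pi.single k 1 : Fin N → ℂ) := by
    funext j
    simp [Pi.single_apply, Finset.sum_ite_eq', mul_comm]
  rw [hv]
  rw [← Matrix.det_transpose, ← Matrix.updateCol_transpose]
  have : (Matrix.updateCol Aᵀ i
        (∑ k : Fin N, (d k * A i k) • (Pi.single k 1 : Fin N → ℂ))).det
      = Matrix.cramer Aᵀ (∑ k : Fin N, (d k * A i k) • (Pi.single k 1 : Fin N → ℂ)) i := by
    rw [Matrix.cramer_apply]
  rw [this, map_sum]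
  simp only [LinearMap.map_smul, Finset.sum_apply, Pi.smul_apply, smul_eq_mul]
  simp only [Matrix.adjugate_def, Matrix.of_apply]

lemma sum_det_updateRow {N : ℕ} (A : Matrix (Fin N) (Fin N) ℂ) (d : Fin N → ℂ) :
    ∑ i, (A.updateRow i (fun j => d j * A i j)).det = (∑ j, d j) * A.det := by
  simp only [det_updateRow_mulRow]
  rw [Finset.sum_comm]
  rw [Finset.sum_mul]
  congr 1; funext k
  have : ∑ i, d k * A i k * A.adjugate k i = d k * ∑ i, A.adjugate k i * A i k := by
    rw [Finset.mul_sum]; congr 1; funext i; ring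
  rw [this]
  have h2 : ∑ i, A.adjugate k i * A i k = (A.adjugate * A) k k := by
    simp [Matrix.mul_apply]
  rw [h2, Matrix.adjugate_mul]
  simp

lemma vprod_split {N : ℕ} (w : Fin N → ℂ) (i : Fin N) :
    vprod w = (∏ j ∈ univ.erase i,
        ((if i < j then w i - w j else 1) * (if j < i then w j - w i else 1))) *
      ∏ a ∈ univ.erase i, ∏ b ∈ univ.erase i, (if a < b then w a - w b else 1) := by
  unfold vprod
  rw [← Finset.mul_prod_erase univ _ (mem_univ i)]
  have h1 : (∏ j : Fin N, if i < j then w i - w j else 1)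
      = ∏ j ∈ univ.erase i, (if i < j then w i - w j else 1) := by
    rw [← Finset.mul_prod_erase univ _ (mem_univ i)]
    simp
  have h2 : ∀ a ∈ univ.erase i, (∏ b : Fin N, if a < b then w a - w b else 1)
      = (if a < i then w a - w i else 1) * ∏ b ∈ univ.erase i, (if a < b then w a - w b else 1) :=
    fun a _ => (Finset.mul_prod_erase univ _ (mem_univ i)).symm
  rw [h1, Finset.prod_congr rfl h2, Finset.prod_mul_distrib, Finset.prod_mul_distrib]
  ring_nf

lemma vprod_update {N : ℕ} (x : Fin N → ℂ) (hx : Function.Injective x) (i : Fin N) (c : ℂ) :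
    vprod (Function.update x i c)
      = (∏ j ∈ univ.erase i, (c - x j) / (x i - x j)) * vprod x := by
  rw [vprod_split (Function.update x i c) i, vprod_split x i]
  have hB : (∏ a ∈ univ.erase i, ∏ b ∈ univ.erase i,
        (if a < b then Function.update x i c a - Function.update x i c b else 1))
      = ∏ a ∈ univ.erase i, ∏ b ∈ univ.erase i, (if a < b then x a - x b else 1) := by
    apply Finset.prod_congr rfl
    intro a ha
    apply Finset.prod_congr rfl
    intro b hb
    rw [Function.update_of_ne (Finset.ne_of_mem_erase ha),
      Function.update_of_ne (Finset.ne_of_mem_erase hb)]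
  rw [hB, ← mul_assoc]
  congr 1
  rw [← Finset.prod_mul_distrib]
  apply Finset.prod_congr rfl
  intro j hj
  have hji : j ≠ i := Finset.ne_of_mem_erase hj
  have hne : x i - x j ≠ 0 := sub_ne_zero.mpr (fun h => hji (hx h).symm)
  rw [Function.update_self, Function.update_of_ne hji]
  rcases lt_trichotomy i j with h | h | h
  · rw [if_pos h, if_neg (asymm h), if_pos h, if_neg (asymm h)]
    field_simp
  · exact absurd h.symm hji
  · rw [if_neg (asymm h), if_pos h, if_neg (asymm h), if_pos h]
    field_simp
    ring

lemma vprod_ne_zero_s9 {N : ℕ} (x : Fin N → ℂ) (hx : Function.Injective x) : vprod x ≠ 0 := by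
  unfold vprod
  apply Finset.prod_ne_zero_iff.mpr
  intro a _
  apply Finset.prod_ne_zero_iff.mpr
  intro b _
  split
  · exact sub_ne_zero.mpr (fun h => absurd (hx h) (ne_of_lt ‹a < b›))
  · exact one_ne_zero

end Aux

/-- Eigenrelation for the rational Schur function:
`∑_i ∏_{j≠i} ((q x_i − x_j)/(x_i − x_j)) s_λ(x with x_i ↦ q x_i)
 = (∑_j q^{λ_j + N - j}) s_λ(x)`. -/
theorem statement9 (N : ℕ) (hN : 1 ≤ N) (lam : Fin N → ℤ) (hlam : Antitone lam)
    (x : Fin N → ℂ) (hx : Function.Injective x) (hx0 : ∀ i, x i ≠ 0)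
    (q : ℂ) (hq : q ≠ 0) (hqx : ∀ i j : Fin N, i ≠ j → q * x i ≠ x j) :
    ∑ i : Fin N,
        (∏ j ∈ Finset.univ.erase i, (q * x i - x j) / (x i - x j)) *
          schurFun N lam (Function.update x i (q * x i)) =
      (∑ j : Fin N, q ^ (lam j + (N : ℤ) - 1 - ((j : ℕ) : ℤ))) * schurFun N lam x := by
  set μ : Fin N → ℤ := fun j => lam j + (N : ℤ) - 1 - ((j : ℕ) : ℤ) with hμ
  set A : Matrix (Fin N) (Fin N) ℂ := Matrix.of (fun i j : Fin N => x i ^ μ j) with hA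
  set d : Fin N → ℂ := fun j => q ^ μ j with hd
  set V : ℂ := vprod x with hV
  have hVne : V ≠ 0 := vprod_ne_zero_s9 x hx
  have hterm : ∀ i : Fin N,
      (∏ j ∈ Finset.univ.erase i, (q * x i - x j) / (x i - x j)) *
        schurFun N lam (Function.update x i (q * x i))
      = (A.updateRow i (fun j => d j * A i j)).det / V := by
    intro i
    have hr : (∏ j ∈ Finset.univ.erase i, (q * x i - x j) / (x i - x j)) ≠ 0 := by
      apply Finset.prod_ne_zero_iff.mpr
      intro j hj
      have hji : j ≠ i := Finset.ne_of_mem_erase hj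
      exact div_ne_zero (sub_ne_zero.mpr (hqx i j hji.symm))
        (sub_ne_zero.mpr (fun h => hji (hx h).symm))
    set r : ℂ := ∏ j ∈ Finset.univ.erase i, (q * x i - x j) / (x i - x j) with hrdef
    have hmat : (Matrix.of fun i' j : Fin N =>
        (Function.update x i (q * x i)) i' ^ (lam j + (N : ℤ) - 1 - ((j : ℕ) : ℤ)))
        = A.updateRow i (fun j => d j * A i j) := by
      ext i' j
      by_cases h : i' = i
      · subst h
        simp only [Matrix.of_apply, Function.update_self, Matrix.updateRow_self, hd, hA,
          Matrix.of_apply]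
        rw [mul_zpow]
      · simp only [Matrix.of_apply, Function.update_of_ne h, Matrix.updateRow_ne h, hA,
          Matrix.of_apply]
        rfl
    have hvp : vprod (Function.update x i (q * x i)) = r * V := by
      rw [vprod_update x hx i (q * x i), hrdef, hV]
    unfold schurFun
    rw [hmat, hvp]
    rw [← mul_div_assoc, mul_div_mul_left _ _ hr]
  rw [Finset.sum_congr rfl (fun i _ => hterm i), ← Finset.sum_div, sum_det_updateRow]
  unfold schurFun
  rw [← hA, ← hV, mul_div_assoc]
end
end
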